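/- arXiv:2506.15975 — 4 statements merged into one kernel-verified Lean document; each statement's English description precedes it below -/
import Mathlib

section
/- Let T ≥ 1 be an integer and let X be a random variable following a Gamma distribution with shape parameter T and scale parameter 1/T. Then for every real a ≥ 1, Pr(X ≥ a) ≤ exp(T · (a·(1/e − 1) + 1)), i.e., Pr(X ≥ a) ≤ exp(T·(a/e − a + 1)). -/
open MeasureTheory ProbabilityTheory

/-- If `X ~ Gamma(T, 1/T)` (shape `T`, scale `1/T`, i.e. rate `T`), then for every `a ≥ 1`,
`Pr(X ≥ a) ≤ exp(T·(a·(1/e − 1) + 1))`. -/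
theorem gamma_tail_bound_exp
    {Ω : Type*} [MeasurableSpace Ω] (μ : Measure Ω) [IsProbabilityMeasure μ]
    (T : ℕ) (hT : 1 ≤ T) (X : Ω → ℝ)
    (hX : Measure.map X μ = gammaMeasure T T)
    (a : ℝ) (ha : 1 ≤ a) :
    μ {ω | a ≤ X ω} ≤
      ENNReal.ofReal (Real.exp (T * (a * (1 / Real.exp 1 - 1) + 1))) := by
  have hT0 : (0:ℝ) < (T:ℝ) := by exact_mod_cast hT
  have he : (0:ℝ) < Real.exp 1 := Real.exp_pos 1
  have he1 : (1:ℝ) ≤ Real.exp 1 := by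
    nlinarith [Real.add_one_le_exp (1:ℝ)]
  set r : ℝ := (T:ℝ) / Real.exp 1 with hr
  have hr0 : 0 < r := div_pos hT0 he
  set C : ℝ := Real.exp ((T:ℝ) * (a * (1 / Real.exp 1 - 1) + 1)) with hC
  have hXm : AEMeasurable X μ := by
    by_contra h
    have h1 : IsProbabilityMeasure (gammaMeasure T T) :=
      isProbabilityMeasure_gammaMeasure hT0 hT0
    rw [Measure.map_of_not_aemeasurable h] at hX
    have h2 := h1.measure_univ
    rw [← hX] at h2
    simp at h2
  have hset : μ {ω | a ≤ X ω} = Measure.map X μ (Set.Ici a) := by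
    rw [Measure.map_apply_of_aemeasurable hXm measurableSet_Ici]
    rfl
  rw [hset, hX, gammaMeasure, withDensity_apply _ measurableSet_Ici]
  have key : ∀ x ∈ Set.Ici a, gammaPDF T T x ≤ ENNReal.ofReal C * gammaPDF T r x := by
    intro x hx
    have hax : a ≤ x := hx
    have hx0 : (0:ℝ) ≤ x := by linarith
    rw [gammaPDF_of_nonneg hx0, gammaPDF_of_nonneg hx0,
      ← ENNReal.ofReal_mul (Real.exp_nonneg _)]
    apply ENNReal.ofReal_le_ofReal
    have hG : 0 < Real.Gamma (T:ℝ) := Real.Gamma_pos_of_pos hT0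
    have hK : (0:ℝ) ≤ (T:ℝ) ^ (T:ℝ) / Real.Gamma (T:ℝ) * x ^ ((T:ℝ) - 1) := by
      positivity
    have hrT : r ^ (T:ℝ) = (T:ℝ) ^ (T:ℝ) / Real.exp (T:ℝ) := by
      rw [hr, Real.div_rpow hT0.le he.le, Real.exp_one_rpow]
    rw [hrT]
    have hexp : Real.exp (-((T:ℝ) * x)) ≤ C / Real.exp (T:ℝ) * Real.exp (-(r * x)) := by
      rw [hC, ← Real.exp_sub, ← Real.exp_add]
      apply Real.exp_le_exp.mpr
      have h1 : 1 / Real.exp 1 ≤ 1 := by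
        rw [div_le_one he]; exact he1
      have hrx : r * x = (T:ℝ) * x * (1 / Real.exp 1) := by
        rw [hr]; ring
      have hra : r * a = (T:ℝ) * a * (1 / Real.exp 1) := by
        rw [hr]; ring
      nlinarith [mul_nonneg (mul_nonneg hT0.le (sub_nonneg.2 h1)) (sub_nonneg.2 hax)]
    calc (T:ℝ) ^ (T:ℝ) / Real.Gamma (T:ℝ) * x ^ ((T:ℝ) - 1) * Real.exp (-((T:ℝ) * x))
        ≤ (T:ℝ) ^ (T:ℝ) / Real.Gamma (T:ℝ) * x ^ ((T:ℝ) - 1) *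
            (C / Real.exp (T:ℝ) * Real.exp (-(r * x))) :=
          mul_le_mul_of_nonneg_left hexp hK
      _ = C * ((T:ℝ) ^ (T:ℝ) / Real.exp (T:ℝ) / Real.Gamma (T:ℝ) * x ^ ((T:ℝ) - 1) *
            Real.exp (-(r * x))) := by ring
  calc ∫⁻ x in Set.Ici a, gammaPDF T T x
      ≤ ∫⁻ x in Set.Ici a, ENNReal.ofReal C * gammaPDF T r x :=
        setLIntegral_mono
          ((measurable_gammaPDFReal _ _).ennreal_ofReal.const_mul _) key
    _ = ENNReal.ofReal C * ∫⁻ x in Set.Ici a, gammaPDF T r x :=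
        lintegral_const_mul' _ _ ENNReal.ofReal_ne_top
    _ ≤ ENNReal.ofReal C * ∫⁻ x, gammaPDF T r x := by
        gcongr
        exact Measure.restrict_le_self
    _ = ENNReal.ofReal C := by
        rw [lintegral_gammaPDF_eq_one hT0 hr0, mul_one]
end

section
/- Let T ≥ 1 and K ≥ 1 be integers, and let {u_i(ξ) : 1 ≤ i ≤ T, 1 ≤ ξ ≤ K} be a family of mutually independent random variables, each uniformly distributed on [0, 1]. Define for each ξ the score S_k(ξ) = −(1/T) · Σ_{i=1}^{T} ln(1 − u_i(ξ)). Then for every real τ_k ≥ e/(e−1), Pr(max_{1 ≤ ξ ≤ K} S_k(ξ) ≥ τ_k) ≤ 1 − (1 − exp(T·(τ_k·(1/e − 1) + 1)))^K. -/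
open MeasureTheory ProbabilityTheory

section Aux

variable {Ω : Type*} [MeasurableSpace Ω] {μ : Measure Ω}

/-- Independence of a single column of the array. -/
lemma fke_col_indep {T K : ℕ} (u : Fin T × Fin K → Ω → ℝ)
    (hindep : iIndepFun u μ) (ξ : Fin K) :
    iIndepFun (fun i => u (i, ξ)) μ := by
  rw [iIndepFun_iff_measure_inter_preimage_eq_mul] at hindep ⊢
  intro s sets hsets
  classical
  have hemb : Function.Injective (fun i : Fin T => ((i, ξ) : Fin T × Fin K)) := by
    intro a b h
    exact (Prod.ext_iff.mp h).1
  have h := hindep (s.map ⟨_, hemb⟩) (sets := fun p => sets p.1) ?_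
  · rw [Finset.prod_map] at h
    have hset : (⋂ p ∈ s.map ⟨_, hemb⟩, u p ⁻¹' sets p.1) =
        ⋂ i ∈ s, u (i, ξ) ⁻¹' sets i := by
      ext ω
      simp only [Set.mem_iInter, Finset.mem_map, Function.Embedding.coeFn_mk,
        forall_exists_index, and_imp]
      constructor
      · intro hmem i hi
        exact hmem (i, ξ) i hi rfl
      · rintro hmem p i hi rfl
        exact hmem i hi
    rw [hset] at h
    exact h
  · intro p hp
    rw [Finset.mem_map] at hp
    obtain ⟨i, hi, rfl⟩ := hp
    exact hsets i hi

/-- The moment generating function computation for a single uniform variable: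
`E[exp((1 - 1/e) · (−log(1 − v)))] = e`, together with integrability. -/
lemma fke_mgf_one (μ : Measure Ω) [IsProbabilityMeasure μ] (v : Ω → ℝ) (hv : Measurable v)
    (hunif : Measure.map v μ = volume.restrict (Set.Icc (0 : ℝ) 1)) :
    (∫ ω, Real.exp ((1 - (Real.exp 1)⁻¹) * -Real.log (1 - v ω)) ∂μ = Real.exp 1) ∧
      Integrable (fun ω => Real.exp ((1 - (Real.exp 1)⁻¹) * -Real.log (1 - v ω))) μ := by
  have he : (0 : ℝ) < Real.exp 1 := Real.exp_pos 1
  set r : ℝ := (Real.exp 1)⁻¹ - 1 with hr_def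
  have hr : -1 < r := by
    have : (0 : ℝ) < (Real.exp 1)⁻¹ := by positivity
    simp only [hr_def]; linarith
  have hr1 : r + 1 = (Real.exp 1)⁻¹ := by ring
  have hr1ne : r + 1 ≠ 0 := by rw [hr1]; positivity
  set g : ℝ → ℝ := fun x => Real.exp ((1 - (Real.exp 1)⁻¹) * -Real.log (1 - x)) with hg_def
  have hg : Measurable g :=
    (((Real.measurable_log.comp (measurable_const.sub measurable_id)).neg).const_mul
      _).exp
  -- a.e. equality with the rpow function on [0,1]
  have hae : g =ᵐ[volume.restrict (Set.Icc (0 : ℝ) 1)] fun x => (1 - x) ^ r := by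
    have h1 : ∀ᵐ x ∂(volume.restrict (Set.Icc (0 : ℝ) 1)), x ≠ 1 := by
      refine ae_restrict_of_ae ?_
      have : volume ({1} : Set ℝ) = 0 := Real.volume_singleton
      rw [ae_iff]
      simpa using this
    filter_upwards [h1, ae_restrict_mem measurableSet_Icc] with x hx1 hx
    have hpos : 0 < 1 - x := by
      rcases lt_or_eq_of_le hx.2 with h | h
      · linarith
      · exact absurd h hx1
    rw [Real.rpow_def_of_pos hpos]
    simp only [hg_def]
    congr 1
    ring
  -- integrability of the rpow function on [0,1]
  have hint_rpow : IntegrableOn (fun x : ℝ => (1 - x) ^ r) (Set.Icc (0 : ℝ) 1) volume := by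
    have h1 : IntervalIntegrable (fun x : ℝ => x ^ r) volume 0 1 :=
      intervalIntegral.intervalIntegrable_rpow' hr
    have h2 := (h1.comp_sub_left 1).symm
    norm_num at h2
    rw [intervalIntegrable_iff_integrableOn_Ioc_of_le (by norm_num : (0:ℝ) ≤ 1)] at h2
    rwa [integrableOn_Icc_iff_integrableOn_Ioc]
  have hg_int : Integrable g (volume.restrict (Set.Icc (0 : ℝ) 1)) :=
    hint_rpow.congr hae.symm
  constructor
  · have hmap : ∫ ω, g (v ω) ∂μ = ∫ x, g x ∂(Measure.map v μ) :=
      (integral_map hv.aemeasurable hg.aestronglyMeasurable).symm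
    have hval : ∫ x in Set.Icc (0 : ℝ) 1, (1 - x) ^ r = Real.exp 1 := by
      rw [MeasureTheory.integral_Icc_eq_integral_Ioc,
        ← intervalIntegral.integral_of_le (by norm_num : (0:ℝ) ≤ 1)]
      have hsub := intervalIntegral.integral_comp_sub_left (a := (0:ℝ)) (b := 1)
        (fun x : ℝ => x ^ r) 1
      norm_num at hsub
      rw [hsub, integral_rpow (Or.inl hr)]
      rw [Real.one_rpow, Real.zero_rpow hr1ne, hr1]
      field_simp
      norm_num
    calc ∫ ω, g (v ω) ∂μ = ∫ x, g x ∂(Measure.map v μ) := hmap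
      _ = ∫ x in Set.Icc (0 : ℝ) 1, g x := by rw [hunif]
      _ = ∫ x in Set.Icc (0 : ℝ) 1, (1 - x) ^ r := integral_congr_ae hae
      _ = Real.exp 1 := hval
  · have : Integrable g (Measure.map v μ) := by rw [hunif]; exact hg_int
    exact (integrable_map_measure hg.aestronglyMeasurable hv.aemeasurable).mp this

/-- Chernoff bound for one column. -/
lemma fke_chernoff (μ : Measure Ω) [IsProbabilityMeasure μ] {T : ℕ} (hT : 1 ≤ T)
    (v : Fin T → Ω → ℝ) (hmeas : ∀ i, Measurable (v i))
    (hind : iIndepFun v μ)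
    (hunif : ∀ i, Measure.map (v i) μ = volume.restrict (Set.Icc (0 : ℝ) 1))
    (τk : ℝ) :
    (μ {ω | τk ≤ -(1 / (T : ℝ)) * ∑ i : Fin T, Real.log (1 - v i ω)}).toReal ≤
      Real.exp ((T : ℝ) * (τk * (1 / Real.exp 1 - 1) + 1)) := by
  have hTpos : (0 : ℝ) < T := by exact_mod_cast hT
  set lam : ℝ := 1 - (Real.exp 1)⁻¹ with hlam_def
  have hlam_nonneg : 0 ≤ lam := by
    have : (Real.exp 1)⁻¹ ≤ 1 := by
      rw [inv_le_one_iff₀]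
      right
      have := Real.exp_pos 1
      calc (1:ℝ) = Real.exp 0 := (Real.exp_zero).symm
        _ ≤ Real.exp 1 := Real.exp_le_exp.mpr (by norm_num)
    simp only [hlam_def]; linarith
  set X : Fin T → Ω → ℝ := fun i ω => -Real.log (1 - v i ω) with hX_def
  have hXmeas : ∀ i, Measurable (X i) := fun i =>
    (Real.measurable_log.comp (measurable_const.sub (hmeas i))).neg
  have hXind : iIndepFun X μ :=
    hind.comp (fun _ x => -Real.log (1 - x))
      (fun _ => (Real.measurable_log.comp (measurable_const.sub measurable_id)).neg)
  have hXint : ∀ i, Integrable (fun ω => Real.exp (lam * X i ω)) μ := fun i =>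
    (fke_mgf_one μ (v i) (hmeas i) (hunif i)).2
  have hXmgf : ∀ i, mgf (X i) μ lam = Real.exp 1 := fun i =>
    (fke_mgf_one μ (v i) (hmeas i) (hunif i)).1
  -- rewrite the event
  have hset : {ω | τk ≤ -(1 / (T : ℝ)) * ∑ i : Fin T, Real.log (1 - v i ω)} =
      {ω | τk * T ≤ (∑ i : Fin T, X i) ω} := by
    ext ω
    simp only [Set.mem_setOf_eq, Finset.sum_apply]
    have hsum : -(1 / (T : ℝ)) * ∑ i : Fin T, Real.log (1 - v i ω) =
        (∑ i : Fin T, X i ω) / T := by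
      simp only [hX_def, Finset.sum_neg_distrib]
      field_simp
    rw [hsum, le_div_iff₀ hTpos]
  have hint_sum : Integrable (fun ω => Real.exp (lam * (∑ i : Fin T, X i) ω)) μ :=
    hXind.integrable_exp_mul_sum hXmeas (fun i _ => hXint i)
  have hchern := measure_ge_le_exp_mul_mgf (X := ∑ i : Fin T, X i) (μ := μ) (t := lam)
    (τk * T) hlam_nonneg hint_sum
  have hmgf : mgf (∑ i : Fin T, X i) μ lam = Real.exp 1 ^ T := by
    rw [hXind.mgf_sum hXmeas]
    simp [hXmgf]
  rw [hmgf] at hchern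
  rw [hset]
  refine hchern.trans (le_of_eq ?_)
  have hpow : Real.exp 1 ^ T = Real.exp (T : ℝ) := by
    rw [← Real.exp_nat_mul]; norm_num
  rw [hpow, ← Real.exp_add]
  congr 1
  simp only [hlam_def, one_div]
  ring

end Aux

/-- False positive bound for the Full Key Encoding method: if the `u i ξ` are mutually
independent and uniform on `[0,1]`, and `S_k(ξ) = −(1/T) ∑ i, ln(1 − u i ξ)`, then for
`τ_k ≥ e/(e−1)`,
`Pr(max_ξ S_k(ξ) ≥ τ_k) ≤ 1 − (1 − exp(T·(τ_k·(1/e − 1) + 1)))^K`. -/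
theorem fke_false_positive_bound
    {Ω : Type*} [MeasurableSpace Ω] (μ : Measure Ω) [IsProbabilityMeasure μ]
    (T K : ℕ) (hT : 1 ≤ T) (hK : 1 ≤ K)
    (u : Fin T × Fin K → Ω → ℝ) (hmeas : ∀ p, Measurable (u p))
    (hindep : iIndepFun u μ)
    (hunif : ∀ p, Measure.map (u p) μ = volume.restrict (Set.Icc (0 : ℝ) 1))
    (τk : ℝ) (hτk : Real.exp 1 / (Real.exp 1 - 1) ≤ τk) :
    μ {ω | τk ≤ ⨆ ξ : Fin K,
        -(1 / (T : ℝ)) * ∑ i : Fin T, Real.log (1 - u (i, ξ) ω)} ≤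
      ENNReal.ofReal
        (1 - (1 - Real.exp ((T : ℝ) * (τk * (1 / Real.exp 1 - 1) + 1))) ^ K) := by
  classical
  haveI : Nonempty (Fin K) := Fin.pos_iff_nonempty.mp hK
  have he : (0 : ℝ) < Real.exp 1 := Real.exp_pos 1
  have he1 : (1 : ℝ) < Real.exp 1 := by
    calc (1:ℝ) = Real.exp 0 := (Real.exp_zero).symm
      _ < Real.exp 1 := Real.exp_lt_exp.mpr (by norm_num)
  set p : ℝ := Real.exp ((T : ℝ) * (τk * (1 / Real.exp 1 - 1) + 1)) with hp_def
  have hp_pos : 0 < p := Real.exp_pos _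
  have hp_le_one : p ≤ 1 := by
    rw [hp_def, Real.exp_le_one_iff]
    have hτ' : τk * (1 / Real.exp 1 - 1) + 1 ≤ 0 := by
      have h1 : 1 / Real.exp 1 - 1 < 0 := by
        rw [sub_neg, div_lt_one he]
        exact he1
      have h2 : τk * (1 / Real.exp 1 - 1) ≤
          (Real.exp 1 / (Real.exp 1 - 1)) * (1 / Real.exp 1 - 1) :=
        mul_le_mul_of_nonpos_right hτk h1.le
      have h3 : (Real.exp 1 / (Real.exp 1 - 1)) * (1 / Real.exp 1 - 1) = -1 := by
        have hne : Real.exp 1 - 1 ≠ 0 := by linarith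
        field_simp
        ring
      rw [h3] at h2
      linarith
    have hT0 : (0:ℝ) ≤ T := Nat.cast_nonneg T
    exact mul_nonpos_of_nonneg_of_nonpos hT0 hτ'
  -- the score functions
  set S : Fin K → Ω → ℝ :=
    fun ξ ω => -(1 / (T : ℝ)) * ∑ i : Fin T, Real.log (1 - u (i, ξ) ω) with hS_def
  have hSmeas : ∀ ξ, Measurable (S ξ) := by
    intro ξ
    exact (Finset.measurable_sum _ (fun i _ =>
      Real.measurable_log.comp (measurable_const.sub (hmeas (i, ξ))))).const_mul _
  -- the bad events and their complements
  set A : Fin K → Set Ω := fun ξ => {ω | τk ≤ S ξ ω} with hA_def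
  set E : Fin K → Set Ω := fun ξ => {ω | S ξ ω < τk} with hE_def
  have hA_meas : ∀ ξ, MeasurableSet (A ξ) := fun ξ => measurableSet_le measurable_const (hSmeas ξ)
  have hE_meas : ∀ ξ, MeasurableSet (E ξ) := fun ξ => measurableSet_lt (hSmeas ξ) measurable_const
  have hEA : ∀ ξ, E ξ = (A ξ)ᶜ := by
    intro ξ
    ext ω
    simp [hA_def, hE_def, not_le]
  -- per-column Chernoff bound
  have hA_bound : ∀ ξ, (μ (A ξ)).toReal ≤ p := by
    intro ξ
    exact fke_chernoff μ hT (fun i => u (i, ξ)) (fun i => hmeas (i, ξ))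
      (fke_col_indep u hindep ξ) (fun i => hunif (i, ξ)) τk
  have hE_toReal : ∀ ξ, (μ (E ξ)).toReal = 1 - (μ (A ξ)).toReal := by
    intro ξ
    have h1 : μ (A ξ) + μ ((A ξ)ᶜ) = 1 := by
      rw [measure_add_measure_compl (hA_meas ξ)]; exact measure_univ
    have h2 := congrArg ENNReal.toReal h1
    rw [ENNReal.toReal_add (measure_ne_top μ _) (measure_ne_top μ _)] at h2
    simp only [ENNReal.toReal_one] at h2
    rw [hEA]
    linarith
  have hE_lower : ∀ ξ, 1 - p ≤ (μ (E ξ)).toReal := by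
    intro ξ
    rw [hE_toReal]
    linarith [hA_bound ξ]
  -- independence across columns
  set msp : Set (Fin T × Fin K) → MeasurableSpace Ω :=
    fun P => ⨆ q ∈ P, MeasurableSpace.comap (u q) inferInstance with hmsp_def
  have hS_meas' : ∀ (P : Set (Fin T × Fin K)) (ξ : Fin K), (∀ i, (i, ξ) ∈ P) →
      Measurable[msp P] (S ξ) := by
    intro P ξ hP
    refine Measurable.const_mul ?_ _
    refine Finset.measurable_sum _ (fun i _ => ?_)
    refine Real.measurable_log.comp (measurable_const.sub ?_)
    exact measurable_iff_comap_le.mpr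
      (le_biSup (fun q => MeasurableSpace.comap (u q) inferInstance) (hP i))
  have hE_meas' : ∀ (P : Set (Fin T × Fin K)) (ξ : Fin K), (∀ i, (i, ξ) ∈ P) →
      MeasurableSet[msp P] (E ξ) := by
    intro P ξ hP
    exact hS_meas' P ξ hP measurableSet_Iio
  have key : ∀ s : Finset (Fin K), μ (⋂ ξ ∈ s, E ξ) = ∏ ξ ∈ s, μ (E ξ) := by
    intro s
    induction s using Finset.induction_on with
    | empty => simp
    | @insert a s ha ih =>
      have hdisj : Disjoint {q : Fin T × Fin K | q.2 ∈ (s : Set (Fin K))}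
          {q : Fin T × Fin K | q.2 = a} := by
        rw [Set.disjoint_left]
        rintro ⟨i, ξ⟩ h1 h2
        simp only [Set.mem_setOf_eq] at h1 h2
        subst h2
        exact ha h1
      have hindep2 : Indep (msp {q | q.2 ∈ (s : Set (Fin K))}) (msp {q | q.2 = a}) μ :=
        indep_iSup_of_disjoint (fun q => (hmeas q).comap_le) hindep hdisj
      have ht1 : MeasurableSet[msp {q : Fin T × Fin K | q.2 ∈ (s : Set (Fin K))}]
          (⋂ ξ ∈ s, E ξ) := by
        refine Finset.measurableSet_biInter _ (fun ξ hξ => ?_)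
        exact hE_meas' _ ξ (fun i => by simpa using hξ)
      have ht2 : MeasurableSet[msp {q : Fin T × Fin K | q.2 = a}] (E a) :=
        hE_meas' _ a (fun i => rfl)
      have hmul := (Indep_iff _ _ _).mp hindep2 _ _ ht1 ht2
      rw [Finset.set_biInter_insert, Finset.prod_insert ha, Set.inter_comm, hmul, ih]
      ring
  -- rewriting the target event
  have htarget : {ω | τk ≤ ⨆ ξ : Fin K, S ξ ω} = (⋂ ξ : Fin K, E ξ)ᶜ := by
    ext ω
    simp only [Set.mem_setOf_eq, Set.mem_compl_iff, Set.mem_iInter, hE_def, not_forall, not_lt]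
    constructor
    · intro h
      obtain ⟨ξ, hξ⟩ := exists_eq_ciSup_of_finite (f := fun ξ => S ξ ω)
      exact ⟨ξ, hξ ▸ h⟩
    · rintro ⟨ξ, hξ⟩
      exact hξ.trans (le_ciSup (f := fun ξ => S ξ ω) (Set.Finite.bddAbove (Set.finite_range _)) ξ)
  have hIcap_meas : MeasurableSet (⋂ ξ : Fin K, E ξ) := MeasurableSet.iInter (fun ξ => hE_meas ξ)
  have hsum1 : μ (⋂ ξ : Fin K, E ξ) + μ ((⋂ ξ : Fin K, E ξ)ᶜ) = 1 := by
    rw [measure_add_measure_compl hIcap_meas]; exact measure_univ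
  have hsum1' := congrArg ENNReal.toReal hsum1
  rw [ENNReal.toReal_add (measure_ne_top μ _) (measure_ne_top μ _)] at hsum1'
  simp only [ENNReal.toReal_one] at hsum1'
  have hkey_univ : μ (⋂ ξ : Fin K, E ξ) = ∏ ξ : Fin K, μ (E ξ) := by
    have := key Finset.univ
    simpa using this
  have hprod_toReal : (μ (⋂ ξ : Fin K, E ξ)).toReal = ∏ ξ : Fin K, (μ (E ξ)).toReal := by
    rw [hkey_univ, ENNReal.toReal_prod]
  have hprod_ge : (1 - p) ^ K ≤ ∏ ξ : Fin K, (μ (E ξ)).toReal := by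
    have h1 : ∏ ξ : Fin K, (1 - p) ≤ ∏ ξ : Fin K, (μ (E ξ)).toReal := by
      refine Finset.prod_le_prod (fun ξ _ => by linarith) (fun ξ _ => hE_lower ξ)
    calc (1 - p) ^ K = ∏ _ξ : Fin K, (1 - p) := by
          rw [Finset.prod_const, Finset.card_univ, Fintype.card_fin]
      _ ≤ _ := h1
  have hrhs_nonneg : 0 ≤ 1 - (1 - p) ^ K := by
    have h1 : (1 - p) ^ K ≤ 1 := by
      refine pow_le_one₀ (by linarith) (by linarith)
    linarith
  rw [htarget, ENNReal.le_ofReal_iff_toReal_le (measure_ne_top μ _) hrhs_nonneg]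
  have : (μ ((⋂ ξ : Fin K, E ξ)ᶜ)).toReal = 1 - (μ (⋂ ξ : Fin K, E ξ)).toReal := by
    linarith
  rw [this, hprod_toReal]
  linarith [hprod_ge]
end

section
/- Let T' ≥ 1 be an integer and let u_1, …, u_{T'} be independent random variables, each uniformly distributed on [0, 1]. Define the score S_d = −(1/T') · Σ_{i=1}^{T'} ln(1 − u_i). Then for every real τ_d ≥ 1, Pr(S_d ≥ τ_d) ≤ exp(T' · (τ_d · (1/e − 1) + 1)). -/
open MeasureTheory ProbabilityTheory

lemma dw_aux_integral {t : ℝ} (ht0 : 0 ≤ t) (ht1 : t < 1) :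
    IntegrableOn (fun x => Real.exp (t * -Real.log (1 - x))) (Set.Icc (0:ℝ) 1) volume ∧
    ∫ x in Set.Icc (0:ℝ) 1, Real.exp (t * -Real.log (1 - x)) = (1 - t)⁻¹ := by
  have hr : (-1 : ℝ) < -t := by linarith
  have h1 : IntervalIntegrable (fun x : ℝ => x ^ (-t)) volume 0 1 :=
    intervalIntegral.intervalIntegrable_rpow' hr
  have h2 : IntervalIntegrable (fun x : ℝ => (1 - x) ^ (-t)) volume 0 1 := by
    simpa using (h1.comp_sub_left 1).symm
  have heq : ∀ x ∈ Set.Ioo (0:ℝ) 1,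
      Real.exp (t * -Real.log (1 - x)) = (1 - x) ^ (-t) := by
    intro x hx
    rw [Real.rpow_def_of_pos (by linarith [hx.2] : (0:ℝ) < 1 - x)]
    ring_nf
  have hIoo : IntegrableOn (fun x : ℝ => (1 - x) ^ (-t)) (Set.Ioo (0:ℝ) 1) volume := by
    have := (intervalIntegrable_iff_integrableOn_Ioo_of_le (by norm_num : (0:ℝ) ≤ 1)).mp h2
    exact this
  constructor
  · rw [integrableOn_Icc_iff_integrableOn_Ioo]
    exact (integrableOn_congr_fun (fun x hx => (heq x hx)) measurableSet_Ioo).mpr hIoo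
  · rw [MeasureTheory.integral_Icc_eq_integral_Ioo,
      setIntegral_congr_fun measurableSet_Ioo heq,
      ← MeasureTheory.integral_Ioc_eq_integral_Ioo,
      ← intervalIntegral.integral_of_le (by norm_num : (0:ℝ) ≤ 1),
      intervalIntegral.integral_comp_sub_left (fun x : ℝ => x ^ (-t)) 1]
    norm_num
    rw [integral_rpow (Or.inl hr)]
    rw [Real.zero_rpow (by linarith : -t + 1 ≠ 0)]
    field_simp
    ring_nf
    rw [Real.one_rpow, one_mul]

/-- False positive bound for the Dual Watermark indicator: if `u 1, …, u T'` are independent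
and uniform on `[0,1]`, and `S_d = −(1/T') ∑ i, ln(1 − u i)`, then for every `τ_d ≥ 1`,
`Pr(S_d ≥ τ_d) ≤ exp(T'·(τ_d·(1/e − 1) + 1))`. -/
theorem dw_false_positive_bound
    {Ω : Type*} [MeasurableSpace Ω] (μ : Measure Ω) [IsProbabilityMeasure μ]
    (T' : ℕ) (hT' : 1 ≤ T')
    (u : Fin T' → Ω → ℝ) (hmeas : ∀ i, Measurable (u i))
    (hindep : iIndepFun u μ)
    (hunif : ∀ i, Measure.map (u i) μ = volume.restrict (Set.Icc (0 : ℝ) 1))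
    (τd : ℝ) (hτd : 1 ≤ τd) :
    μ {ω | τd ≤ -(1 / (T' : ℝ)) * ∑ i : Fin T', Real.log (1 - u i ω)} ≤
      ENNReal.ofReal (Real.exp ((T' : ℝ) * (τd * (1 / Real.exp 1 - 1) + 1))) := by
  set t : ℝ := 1 - (Real.exp 1)⁻¹ with ht_def
  have hexp_pos : (0:ℝ) < Real.exp 1 := Real.exp_pos 1
  have hinv_lt : (Real.exp 1)⁻¹ < 1 := by
    rw [inv_lt_one_iff₀]; right; exact Real.one_lt_exp_iff.2 one_pos
  have ht0 : 0 ≤ t := by simp only [ht_def]; linarith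
  have ht1 : t < 1 := by
    simp only [ht_def]; have : (0:ℝ) < (Real.exp 1)⁻¹ := by positivity
    linarith
  obtain ⟨hInt, hIval⟩ := dw_aux_integral ht0 ht1
  -- the exponential random variables
  set g : ℝ → ℝ := fun x => -Real.log (1 - x) with hg_def
  have hgmeas : Measurable g := (Real.measurable_log.comp (measurable_const.sub measurable_id)).neg
  set X : Fin T' → Ω → ℝ := fun i ω => g (u i ω) with hX_def
  have hXmeas : ∀ i, Measurable (X i) := fun i => hgmeas.comp (hmeas i)
  have hXindep : iIndepFun X μ :=
    hindep.comp (fun _ => g) (fun _ => hgmeas)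
  have hfmeas : Measurable fun x : ℝ => Real.exp (t * g x) :=
    (hgmeas.const_mul t).exp
  have h_int : ∀ i, Integrable (fun ω => Real.exp (t * X i ω)) μ := by
    intro i
    have : Integrable (fun x : ℝ => Real.exp (t * g x)) (Measure.map (u i) μ) := by
      rw [hunif i]; exact hInt
    exact this.comp_measurable (hmeas i)
  have h_mgf : ∀ i, mgf (X i) μ t = Real.exp 1 := by
    intro i
    have hmap : ∫ ω, Real.exp (t * g (u i ω)) ∂μ
        = ∫ x, Real.exp (t * g x) ∂(Measure.map (u i) μ) :=
      (integral_map (hmeas i).aemeasurable hfmeas.aestronglyMeasurable).symm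
    have : mgf (X i) μ t = ∫ x, Real.exp (t * g x) ∂(Measure.map (u i) μ) := hmap
    rw [this, hunif i]
    have : (1 - t)⁻¹ = Real.exp 1 := by
      simp only [ht_def]; rw [sub_sub_cancel, inv_inv]
    rw [← this]
    exact hIval
  -- Chernoff bound for the sum
  have h_int_sum : Integrable (fun ω => Real.exp (t * (∑ i, X i) ω)) μ :=
    hXindep.integrable_exp_mul_sum hXmeas (fun i _ => h_int i)
  have hcher := measure_ge_le_exp_mul_mgf (μ := μ) (X := ∑ i, X i)
    ((T' : ℝ) * τd) ht0 h_int_sum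
  have hmgf_sum : mgf (∑ i, X i) μ t = Real.exp (T' : ℝ) := by
    rw [hXindep.mgf_sum hXmeas]
    simp only [h_mgf, Finset.prod_const, Finset.card_univ, Fintype.card_fin]
    rw [← Real.exp_one_pow]
  -- identify the events
  have hTpos : (0:ℝ) < (T' : ℝ) := by exact_mod_cast hT'
  have hset : {ω | τd ≤ -(1 / (T' : ℝ)) * ∑ i : Fin T', Real.log (1 - u i ω)}
      = {ω | (T' : ℝ) * τd ≤ (∑ i, X i) ω} := by
    ext ω
    simp only [Set.mem_setOf_eq, Finset.sum_apply]
    have hsum : -(1 / (T' : ℝ)) * ∑ i : Fin T', Real.log (1 - u i ω)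
        = (1 / (T' : ℝ)) * ∑ i : Fin T', X i ω := by
      rw [Finset.mul_sum, Finset.mul_sum]
      congr 1; ext i; simp only [hX_def, hg_def]; ring
    rw [hsum]
    rw [one_div, inv_mul_eq_div, le_div_iff₀ hTpos]
    constructor <;> intro h <;> linarith
  rw [hset]
  -- arithmetic identity for the bound
  have harith : Real.exp (-t * ((T' : ℝ) * τd)) * Real.exp (T' : ℝ)
      = Real.exp ((T' : ℝ) * (τd * (1 / Real.exp 1 - 1) + 1)) := by
    rw [← Real.exp_add]
    congr 1
    simp only [ht_def, one_div]
    ring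
  calc μ {ω | (T' : ℝ) * τd ≤ (∑ i, X i) ω}
      = ENNReal.ofReal (μ {ω | (T' : ℝ) * τd ≤ (∑ i, X i) ω}).toReal :=
        (ENNReal.ofReal_toReal (measure_ne_top μ _)).symm
    _ ≤ ENNReal.ofReal (Real.exp ((T' : ℝ) * (τd * (1 / Real.exp 1 - 1) + 1))) := by
        apply ENNReal.ofReal_le_ofReal
        calc (μ {ω | (T' : ℝ) * τd ≤ (∑ i, X i) ω}).toReal
            ≤ Real.exp (-t * ((T' : ℝ) * τd)) * mgf (∑ i, X i) μ t := hcher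
          _ = _ := by rw [hmgf_sum, harith]
end

section
/- Let T_d ≥ 1, T_k ≥ 1 and K ≥ 1 be integers, and let {v_i : 1 ≤ i ≤ T_d} together with {u_j(ξ) : 1 ≤ j ≤ T_k, 1 ≤ ξ ≤ K} be a family of mutually independent random variables, each uniformly distributed on [0, 1]. Define S_d = −(1/T_d) · Σ_{i=1}^{T_d} ln(1 − v_i) and, for each ξ, S_k(ξ) = −(1/T_k) · Σ_{j=1}^{T_k} ln(1 − u_j(ξ)). Then for all reals τ_d ≥ 1 and τ_k ≥ e/(e−1): Pr(S_d ≥ τ_d and max_{1 ≤ ξ ≤ K} S_k(ξ) > τ_k) = Pr(S_d ≥ τ_d) · Pr(max_{1 ≤ ξ ≤ K} S_k(ξ) > τ_k), and this joint probability is at most exp(T_d·(τ_d·(1/e − 1) + 1)) · (1 − (1 − exp(T_k·(τ_k·(1/e − 1) + 1)))^K). -/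
open MeasureTheory ProbabilityTheory Real

lemma iIndepFun_comp_inj {Ω ι ι' : Type*} [MeasurableSpace Ω] {μ : Measure Ω}
    {β : Type*} [mβ : MeasurableSpace β] {f : ι → Ω → β}
    (h : iIndepFun f μ) {g : ι' → ι} (hg : Function.Injective g) :
    iIndepFun (fun i => f (g i)) μ := by
  classical
  rw [iIndepFun_iff] at h ⊢
  intro s f' H
  set F : ι → Set Ω := fun i =>
    if hi : ∃ i', i' ∈ s ∧ g i' = i then f' hi.choose else Set.univ with hF
  have hFg : ∀ i' ∈ s, F (g i') = f' i' := by
    intro i' hi'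
    have hex : ∃ j, j ∈ s ∧ g j = g i' := ⟨i', hi', rfl⟩
    simp only [hF, dif_pos hex]
    rw [hg hex.choose_spec.2]
  have key := h (s.image g) (f' := F) ?_
  · have h1 : (⋂ i ∈ s.image g, F i) = ⋂ i ∈ s, f' i := by
      ext ω
      simp only [Set.mem_iInter, Finset.mem_image]
      constructor
      · intro hx i hi
        rw [← hFg i hi]; exact hx _ ⟨i, hi, rfl⟩
      · rintro hx i ⟨j, hj, rfl⟩
        rw [hFg j hj]; exact hx j hj
    have h2 : (∏ i ∈ s.image g, μ (F i)) = ∏ i ∈ s, μ (f' i) := by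
      rw [Finset.prod_image (fun x _ y _ hxy => hg hxy)]
      exact Finset.prod_congr rfl fun i hi => by rw [hFg i hi]
    rw [h1, h2] at key
    exact key
  · intro i hi
    rcases Finset.mem_image.1 hi with ⟨j, hj, rfl⟩
    rw [hFg j hj]
    exact H j hj

lemma t_pos : (0:ℝ) < 1 - (Real.exp 1)⁻¹ := by
  have := Real.exp_one_gt_d9
  rw [sub_pos, inv_lt_one_iff₀]
  right; linarith

lemma t_lt_one : 1 - (Real.exp 1)⁻¹ < 1 := by
  have : 0 < (Real.exp 1)⁻¹ := inv_pos.2 (Real.exp_pos 1)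
  linarith

lemma ae_eq_rpow {t : ℝ} :
    (fun x => Real.exp (t * (-Real.log (1 - x))))
      =ᵐ[volume.restrict (Set.Icc (0:ℝ) 1)] fun x => (1 - x) ^ (-t) := by
  have hne : ∀ᵐ (x : ℝ) ∂volume, x ≠ 1 := by
    rw [ae_iff]
    simpa using Real.volume_singleton (a := 1)
  rw [Filter.EventuallyEq, ae_restrict_iff' measurableSet_Icc]
  filter_upwards [hne] with x hx1 hx
  have hpos : 0 < 1 - x := by
    rcases lt_or_eq_of_le hx.2 with hlt | heq
    · linarith
    · exact absurd heq hx1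
  rw [Real.rpow_def_of_pos hpos]
  ring_nf

lemma integrable_rpow_restrict {t : ℝ} (h1t : t < 1) :
    Integrable (fun x => (1 - x) ^ (-t) : ℝ → ℝ)
      (volume.restrict (Set.Icc (0:ℝ) 1)) := by
  have h1 : IntervalIntegrable (fun x : ℝ => x ^ (-t)) volume 0 1 :=
    intervalIntegral.intervalIntegrable_rpow' (by linarith)
  have h2 : IntervalIntegrable (fun x : ℝ => (1 - x) ^ (-t)) volume 0 1 :=
    by simpa using (h1.comp_sub_left 1).symm
  have h3 : IntegrableOn (fun x : ℝ => (1 - x) ^ (-t)) (Set.Ioc (0:ℝ) 1) volume :=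
    (intervalIntegrable_iff_integrableOn_Ioc_of_le zero_le_one).1 h2
  rwa [IntegrableOn, Measure.restrict_congr_set Ioc_ae_eq_Icc] at h3

lemma integral_rpow_restrict {t : ℝ} (h0t : 0 < t) (h1t : t < 1) :
    ∫ x in Set.Icc (0:ℝ) 1, (1 - x) ^ (-t) = (1 - t)⁻¹ := by
  rw [MeasureTheory.integral_Icc_eq_integral_Ioc,
    ← intervalIntegral.integral_of_le zero_le_one]
  rw [intervalIntegral.integral_comp_sub_left (fun x : ℝ => x ^ (-t)) 1]
  norm_num
  rw [integral_rpow (Or.inl (by linarith))]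
  rw [Real.one_rpow, Real.zero_rpow (by linarith)]
  rw [inv_eq_one_div]
  congr 1 <;> ring

lemma mgf_neg_log_unif {Ω : Type*} [MeasurableSpace Ω] {μ : Measure Ω} [IsProbabilityMeasure μ]
    {X : Ω → ℝ} (hX : Measurable X)
    (hunif : Measure.map X μ = volume.restrict (Set.Icc (0:ℝ) 1)) :
    Integrable (fun ω => Real.exp ((1 - (Real.exp 1)⁻¹) * (-Real.log (1 - X ω)))) μ ∧
      mgf (fun ω => -Real.log (1 - X ω)) μ (1 - (Real.exp 1)⁻¹) = Real.exp 1 := by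
  set t : ℝ := 1 - (Real.exp 1)⁻¹ with ht
  have hg : Measurable fun x : ℝ => Real.exp (t * (-Real.log (1 - x))) :=
    (((measurable_const.sub measurable_id).log).neg.const_mul t).exp
  have hint_map : Integrable (fun x => Real.exp (t * (-Real.log (1 - x))))
      (Measure.map X μ) := by
    rw [hunif]
    exact (integrable_rpow_restrict t_lt_one).congr ae_eq_rpow.symm
  have hint : Integrable (fun ω => Real.exp (t * (-Real.log (1 - X ω)))) μ :=
    (integrable_map_measure hg.aestronglyMeasurable hX.aemeasurable).1 hint_map
  refine ⟨hint, ?_⟩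
  have hmap : ∫ ω, Real.exp (t * (-Real.log (1 - X ω))) ∂μ
      = ∫ x, Real.exp (t * (-Real.log (1 - x))) ∂(Measure.map X μ) :=
    (integral_map hX.aemeasurable hg.aestronglyMeasurable).symm
  rw [mgf, hmap, hunif, integral_congr_ae ae_eq_rpow,
    integral_rpow_restrict t_pos t_lt_one, sub_sub_cancel, inv_inv]

lemma chernoff_unif {Ω : Type*} [MeasurableSpace Ω] (μ : Measure Ω) [IsProbabilityMeasure μ]
    {n : ℕ} (hn : 1 ≤ n) (X : Fin n → Ω → ℝ) (hmeas : ∀ i, Measurable (X i))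
    (hindep : iIndepFun X μ)
    (hunif : ∀ i, Measure.map (X i) μ = volume.restrict (Set.Icc (0:ℝ) 1)) (τ : ℝ) :
    μ {ω | τ ≤ -(1 / (n : ℝ)) * ∑ i, Real.log (1 - X i ω)} ≤
      ENNReal.ofReal (Real.exp ((n:ℝ) * (τ * (1 / Real.exp 1 - 1) + 1))) := by
  set t : ℝ := 1 - (Real.exp 1)⁻¹ with ht
  set Y : Fin n → Ω → ℝ := fun i ω => -Real.log (1 - X i ω) with hY
  have hYmeas : ∀ i, Measurable (Y i) := fun i =>
    ((measurable_const.sub (hmeas i)).log).neg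
  have hYindep : iIndepFun Y μ :=
    hindep.comp (fun _ x => -Real.log (1 - x))
      (fun i => ((measurable_const.sub measurable_id).log).neg)
  have hint : ∀ i ∈ Finset.univ, Integrable (fun ω => Real.exp (t * Y i ω)) μ := fun i _ =>
    (mgf_neg_log_unif (hmeas i) (hunif i)).1
  have hmgf : ∀ i, mgf (Y i) μ t = Real.exp 1 := fun i =>
    (mgf_neg_log_unif (hmeas i) (hunif i)).2
  have hn0 : (0:ℝ) < n := by exact_mod_cast hn
  have hset : {ω | τ ≤ -(1 / (n : ℝ)) * ∑ i, Real.log (1 - X i ω)}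
      = {ω | (n:ℝ) * τ ≤ (∑ i, Y i) ω} := by
    ext ω
    simp only [Set.mem_setOf_eq, Finset.sum_apply, hY, Finset.sum_neg_distrib]
    rw [show -(1 / (n:ℝ)) * (∑ i, Real.log (1 - X i ω))
        = (-∑ i, Real.log (1 - X i ω)) / n from by ring, le_div_iff₀ hn0, mul_comm]
  rw [hset]
  have hintsum : Integrable (fun ω => Real.exp (t * (∑ i, Y i) ω)) μ :=
    hYindep.integrable_exp_mul_sum hYmeas hint
  have hch := measure_ge_le_exp_mul_mgf (μ := μ) (X := ∑ i, Y i) ((n:ℝ) * τ)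
    (le_of_lt t_pos) hintsum
  have hsum_mgf : mgf (∑ i, Y i) μ t = Real.exp 1 ^ n := by
    rw [hYindep.mgf_sum hYmeas Finset.univ]
    simp [hmgf]
  have hexp : Real.exp (-t * ((n:ℝ) * τ)) * Real.exp 1 ^ n
      = Real.exp ((n:ℝ) * (τ * (1 / Real.exp 1 - 1) + 1)) := by
    rw [← Real.exp_nat_mul, ← Real.exp_add]
    congr 1
    rw [ht]
    field_simp
    ring
  rw [hsum_mgf, hexp] at hch
  rw [← ENNReal.ofReal_toReal (measure_ne_top μ _)]
  exact ENNReal.ofReal_le_ofReal hch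

lemma indep_groups {Ω ι κ : Type*} [mΩ : MeasurableSpace Ω] (μ : Measure Ω)
    [IsProbabilityMeasure μ] [Fintype κ] {m : ι → MeasurableSpace Ω}
    (h_le : ∀ i, m i ≤ mΩ) (h_indep : iIndep m μ)
    (g : κ → Set ι) (hg : Pairwise (Function.onFun Disjoint g))
    (C : κ → Set Ω) (hC : ∀ k, MeasurableSet[⨆ i ∈ g k, m i] (C k)) :
    μ (⋂ k, C k) = ∏ k, μ (C k) := by
  classical
  have key : ∀ s : Finset κ, μ (⋂ k ∈ s, C k) = ∏ k ∈ s, μ (C k) := by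
    intro s
    induction s using Finset.induction_on with
    | empty => simp
    | insert a s ha ih =>
      have hdisj : Disjoint (g a) (⋃ k ∈ (↑s : Set κ), g k) := by
        rw [Set.disjoint_iUnion₂_right]
        intro k hk
        exact hg (fun h => ha (h ▸ hk))
      have hind := indep_iSup_of_disjoint h_le h_indep hdisj
      have hCa : MeasurableSet[⨆ i ∈ g a, m i] (C a) := hC a
      have hrest : MeasurableSet[⨆ i ∈ ⋃ k ∈ (↑s : Set κ), g k, m i] (⋂ k ∈ s, C k) := by
        refine MeasurableSet.biInter s.countable_toSet (fun k hk => ?_)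
        have hsub : g k ⊆ ⋃ k ∈ (↑s : Set κ), g k := Set.subset_biUnion_of_mem hk
        exact (biSup_mono hsub : (⨆ i ∈ g k, m i) ≤ _) _ (hC k)
      rw [Finset.set_biInter_insert, Finset.prod_insert ha, ← ih]
      exact (Indep_iff _ _ _).1 hind _ _ hCa hrest
  have h1 : (⋂ k, C k) = ⋂ k ∈ Finset.univ, C k := by simp
  rw [h1, key Finset.univ]

/-- False positive bound for the Hybrid Dual Watermark: with all `w p` mutually independent
and uniform on `[0,1]`, `S_d = −(1/T_d) ∑ i, ln(1 − w (inl i))` and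
`S_k(ξ) = −(1/T_k) ∑ j, ln(1 − w (inr (j, ξ)))`, then for `τ_d ≥ 1` and `τ_k ≥ e/(e−1)`, the
joint probability `Pr(S_d ≥ τ_d ∩ max_ξ S_k(ξ) > τ_k)` factorizes as the product of the
two probabilities and is bounded by
`exp(T_d·(τ_d·(1/e − 1) + 1)) · (1 − (1 − exp(T_k·(τ_k·(1/e − 1) + 1)))^K)`. -/
theorem hdw_false_positive_bound
    {Ω : Type*} [MeasurableSpace Ω] (μ : Measure Ω) [IsProbabilityMeasure μ]
    (Td Tk K : ℕ) (hTd : 1 ≤ Td) (hTk : 1 ≤ Tk) (hK : 1 ≤ K)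
    (w : (Fin Td ⊕ Fin Tk × Fin K) → Ω → ℝ) (hmeas : ∀ p, Measurable (w p))
    (hindep : iIndepFun w μ)
    (hunif : ∀ p, Measure.map (w p) μ = volume.restrict (Set.Icc (0 : ℝ) 1))
    (τd τk : ℝ) (hτd : 1 ≤ τd) (hτk : Real.exp 1 / (Real.exp 1 - 1) ≤ τk) :
    μ ({ω | τd ≤ -(1 / (Td : ℝ)) * ∑ i : Fin Td, Real.log (1 - w (Sum.inl i) ω)} ∩
        {ω | τk < ⨆ ξ : Fin K,
          -(1 / (Tk : ℝ)) * ∑ j : Fin Tk, Real.log (1 - w (Sum.inr (j, ξ)) ω)}) =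
      μ {ω | τd ≤ -(1 / (Td : ℝ)) * ∑ i : Fin Td, Real.log (1 - w (Sum.inl i) ω)} *
      μ {ω | τk < ⨆ ξ : Fin K,
          -(1 / (Tk : ℝ)) * ∑ j : Fin Tk, Real.log (1 - w (Sum.inr (j, ξ)) ω)} ∧
    μ ({ω | τd ≤ -(1 / (Td : ℝ)) * ∑ i : Fin Td, Real.log (1 - w (Sum.inl i) ω)} ∩
        {ω | τk < ⨆ ξ : Fin K,
          -(1 / (Tk : ℝ)) * ∑ j : Fin Tk, Real.log (1 - w (Sum.inr (j, ξ)) ω)}) ≤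
      ENNReal.ofReal (Real.exp ((Td : ℝ) * (τd * (1 / Real.exp 1 - 1) + 1)) *
        (1 - (1 - Real.exp ((Tk : ℝ) * (τk * (1 / Real.exp 1 - 1) + 1))) ^ K)) := by
  classical
  have hKne : Nonempty (Fin K) := ⟨⟨0, hK⟩⟩
  set Sd : Ω → ℝ :=
    fun ω => -(1 / (Td : ℝ)) * ∑ i : Fin Td, Real.log (1 - w (Sum.inl i) ω) with hSd
  set Sk : Fin K → Ω → ℝ :=
    fun ξ ω => -(1 / (Tk : ℝ)) * ∑ j : Fin Tk, Real.log (1 - w (Sum.inr (j, ξ)) ω) with hSkdef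
  set A : Set Ω := {ω | τd ≤ Sd ω} with hA
  set B : Set Ω := {ω | τk < ⨆ ξ : Fin K, Sk ξ ω} with hB
  -- measurability of the statistics (w.r.t. the full σ-algebra)
  have hSdmeas : Measurable Sd := by
    apply Measurable.const_mul
    exact Finset.measurable_sum _ fun i _ => (measurable_const.sub (hmeas _)).log
  have hSkmeas : ∀ ξ, Measurable (Sk ξ) := by
    intro ξ
    apply Measurable.const_mul
    exact Finset.measurable_sum _ fun j _ => (measurable_const.sub (hmeas _)).log
  have hbdd : ∀ ω, BddAbove (Set.range fun ξ : Fin K => Sk ξ ω) :=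
    fun ω => (Set.finite_range _).bddAbove
  -- B as a finite union
  have hBunion : B = ⋃ ξ : Fin K, {ω | τk < Sk ξ ω} := by
    ext ω
    simp only [hB, Set.mem_setOf_eq, Set.mem_iUnion]
    exact lt_ciSup_iff (hbdd ω)
  have hBmeas : MeasurableSet B := by
    rw [hBunion]
    exact MeasurableSet.iUnion fun ξ => measurableSet_lt measurable_const (hSkmeas ξ)
  -- comap σ-algebras
  set m : (Fin Td ⊕ Fin Tk × Fin K) → MeasurableSpace Ω :=
    fun p => MeasurableSpace.comap (w p) inferInstance with hm
  have h_le : ∀ p, m p ≤ _ := fun p => (hmeas p).comap_le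
  have hiI : iIndep m μ := hindep.iIndep
  have hwS : ∀ (S : Set (Fin Td ⊕ Fin Tk × Fin K)) p, p ∈ S →
      Measurable[⨆ q ∈ S, m q] (w p) := fun S p hp =>
    measurable_iff_comap_le.2 (le_biSup m hp)
  -- Part 1 : independence of A and B
  have hABindep : Indep (⨆ p ∈ Set.range (Sum.inl : Fin Td → _), m p)
      (⨆ p ∈ Set.range (Sum.inr : Fin Tk × Fin K → _), m p) μ := by
    refine indep_iSup_of_disjoint h_le hiI ?_
    rw [Set.disjoint_left]
    rintro p ⟨i, rfl⟩ ⟨q, hq⟩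
    cases hq
  have hAmd : MeasurableSet[⨆ p ∈ Set.range (Sum.inl : Fin Td → _), m p] A := by
    have hSdm : Measurable[⨆ p ∈ Set.range (Sum.inl : Fin Td → _), m p] Sd := by
      apply Measurable.const_mul
      exact Finset.measurable_sum _ fun i _ =>
        (measurable_const.sub (hwS (Set.range Sum.inl) _ ⟨i, rfl⟩)).log
    exact hSdm measurableSet_Ici
  have hBmk : MeasurableSet[⨆ p ∈ Set.range (Sum.inr : Fin Tk × Fin K → _), m p] B := by
    have hSkm : ∀ ξ, Measurable[⨆ p ∈ Set.range (Sum.inr : Fin Tk × Fin K → _), m p]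
        (Sk ξ) := by
      intro ξ
      apply Measurable.const_mul
      exact Finset.measurable_sum _ fun j _ =>
        (measurable_const.sub (hwS (Set.range Sum.inr) _ ⟨(j, ξ), rfl⟩)).log
    rw [hBunion]
    exact MeasurableSet.iUnion fun ξ => (hSkm ξ) measurableSet_Ioi
  have heq1 : μ (A ∩ B) = μ A * μ B := (Indep_iff _ _ _).1 hABindep A B hAmd hBmk
  refine ⟨heq1, ?_⟩
  -- abbreviations for the exponential bounds
  set ed : ℝ := Real.exp ((Td : ℝ) * (τd * (1 / Real.exp 1 - 1) + 1)) with hed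
  set ek : ℝ := Real.exp ((Tk : ℝ) * (τk * (1 / Real.exp 1 - 1) + 1)) with hek
  have hE1 : (1:ℝ) < Real.exp 1 := by
    have := Real.exp_one_gt_d9; linarith
  have hek_le_one : ek ≤ 1 := by
    rw [hek, Real.exp_le_one_iff]
    have h3 : Real.exp 1 ≤ τk * (Real.exp 1 - 1) := by
      have := mul_le_mul_of_nonneg_right hτk (by linarith : (0:ℝ) ≤ Real.exp 1 - 1)
      rwa [div_mul_cancel₀ _ (by linarith : Real.exp 1 - 1 ≠ 0)] at this
    have h4 : τk * (1 / Real.exp 1 - 1) + 1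
        = (Real.exp 1 - τk * (Real.exp 1 - 1)) / Real.exp 1 := by
      field_simp; ring
    have h5 : τk * (1 / Real.exp 1 - 1) + 1 ≤ 0 := by
      rw [h4]
      apply div_nonpos_of_nonpos_of_nonneg (by linarith) (Real.exp_pos 1).le
    have hTk0 : (0:ℝ) ≤ (Tk:ℝ) := Nat.cast_nonneg _
    nlinarith
  have hek_nonneg : 0 ≤ ek := Real.exp_nonneg _
  -- Chernoff bound for A
  have hAbound : μ A ≤ ENNReal.ofReal ed :=
    chernoff_unif μ hTd (fun i => w (Sum.inl i)) (fun i => hmeas _)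
      (iIndepFun_comp_inj hindep Sum.inl_injective) (fun i => hunif _) τd
  -- Chernoff bound per key
  have hSkbound : ∀ ξ, μ {ω | τk ≤ Sk ξ ω} ≤ ENNReal.ofReal ek := fun ξ =>
    chernoff_unif μ hTk (fun j => w (Sum.inr (j, ξ))) (fun j => hmeas _)
      (iIndepFun_comp_inj hindep (fun j j' h => by
        exact congrArg Prod.fst (Sum.inr_injective h))) (fun j => hunif _) τk
  -- the complement of B is the intersection of the per-key events
  set D : Fin K → Set Ω := fun ξ => {ω | Sk ξ ω ≤ τk} with hD
  have hDmeas : ∀ ξ, MeasurableSet (D ξ) := fun ξ =>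
    measurableSet_le (hSkmeas ξ) measurable_const
  have hBc : Bᶜ = ⋂ ξ, D ξ := by
    ext ω
    simp only [hB, hD, Set.mem_compl_iff, Set.mem_setOf_eq, Set.mem_iInter, not_lt]
    exact ciSup_le_iff (hbdd ω)
  -- product structure over keys
  have hprod : μ (⋂ ξ, D ξ) = ∏ ξ, μ (D ξ) := by
    refine indep_groups μ h_le hiI
      (fun ξ => Set.range fun j : Fin Tk => Sum.inr (j, ξ)) ?_ D ?_
    · intro ξ ξ' hne
      rw [Function.onFun, Set.disjoint_left]
      rintro p ⟨j, rfl⟩ ⟨j', hj'⟩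
      exact hne ((congrArg Prod.snd (Sum.inr_injective hj')).symm)
    · intro ξ
      have hSkm : Measurable[⨆ p ∈ (Set.range fun j : Fin Tk => Sum.inr (j, ξ)), m p]
          (Sk ξ) := by
        apply Measurable.const_mul
        exact Finset.measurable_sum _ fun j _ =>
          (measurable_const.sub (hwS (Set.range fun j : Fin Tk => Sum.inr (j, ξ)) _ ⟨j, rfl⟩)).log
      exact hSkm measurableSet_Iic
  -- real-number computations
  have hDtoReal : ∀ ξ, 1 - ek ≤ (μ (D ξ)).toReal := by
    intro ξ
    have hsub : (D ξ)ᶜ ⊆ {ω | τk ≤ Sk ξ ω} := by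
      intro ω hω
      simp only [hD, Set.mem_compl_iff, Set.mem_setOf_eq, not_le] at hω
      exact le_of_lt hω
    have h1 : μ ((D ξ)ᶜ) ≤ ENNReal.ofReal ek :=
      le_trans (measure_mono hsub) (hSkbound ξ)
    have h2 : (μ ((D ξ)ᶜ)).toReal ≤ ek := by
      have := ENNReal.toReal_mono ENNReal.ofReal_ne_top h1
      rwa [ENNReal.toReal_ofReal hek_nonneg] at this
    have h3 : μ (D ξ) + μ ((D ξ)ᶜ) = 1 := (measure_add_measure_compl (hDmeas ξ)).trans measure_univ
    have h4 : (μ (D ξ)).toReal + (μ ((D ξ)ᶜ)).toReal = 1 := by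
      rw [← ENNReal.toReal_add (measure_ne_top μ _) (measure_ne_top μ _), h3,
        ENNReal.toReal_one]
    linarith
  have hBcToReal : ((1:ℝ) - ek) ^ K ≤ (μ Bᶜ).toReal := by
    rw [hBc, hprod, ENNReal.toReal_prod]
    calc ((1:ℝ) - ek) ^ K = ∏ _ξ : Fin K, ((1:ℝ) - ek) := by
          rw [Finset.prod_const, Finset.card_univ, Fintype.card_fin]
      _ ≤ ∏ ξ, (μ (D ξ)).toReal :=
        Finset.prod_le_prod (fun _ _ => by linarith) (fun ξ _ => hDtoReal ξ)
  have hBbound : μ B ≤ ENNReal.ofReal (1 - (1 - ek) ^ K) := by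
    have h3 : μ B + μ Bᶜ = 1 := (measure_add_measure_compl hBmeas).trans measure_univ
    have h4 : (μ B).toReal + (μ Bᶜ).toReal = 1 := by
      rw [← ENNReal.toReal_add (measure_ne_top μ _) (measure_ne_top μ _), h3,
        ENNReal.toReal_one]
    have h5 : (μ B).toReal ≤ 1 - (1 - ek) ^ K := by linarith [hBcToReal]
    rw [← ENNReal.ofReal_toReal (measure_ne_top μ B)]
    exact ENNReal.ofReal_le_ofReal h5
  -- conclusion
  rw [heq1]
  calc μ A * μ B ≤ ENNReal.ofReal ed * ENNReal.ofReal (1 - (1 - ek) ^ K) :=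
        mul_le_mul' hAbound hBbound
    _ = ENNReal.ofReal (ed * (1 - (1 - ek) ^ K)) :=
        (ENNReal.ofReal_mul (Real.exp_nonneg _)).symm
end
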